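/- Let f₁ = x₁x₂, g₁ = x₂³, g₃ = x₃, f₂ = x₂²x₃. Then f₁ + f₂ cannot be written as σ₁ + ψ₁g₁ + σ₂ + σ₃g₃ with σ₁ ∈ Σ[x₁,x₂], ψ₁ ∈ ℝ[x₁,x₂], σ₂, σ₃ ∈ Σ[x₂,x₃]. -/

import Mathlib

open MvPolynomial

lemma isSumSq_map {R S : Type*} [CommRing R] [CommRing S] (f : R →+* S) {a : R}
    (h : IsSumSq a) : IsSumSq (f a) := by
  induction h with
  | zero => simpa using IsSumSq.zero
  | @sq_add a S pS ih => simpa [map_add, map_mul] using IsSumSq.sq_add (f a) ih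

lemma sumsq_coeff0_nonneg {s : Polynomial ℝ} (h : IsSumSq s) : 0 ≤ s.coeff 0 := by
  rw [Polynomial.coeff_zero_eq_eval_zero]
  exact IsSumSq.nonneg (isSumSq_map (Polynomial.evalRingHom 0) h)

lemma key {s : Polynomial ℝ} (h : IsSumSq s) (h0 : s.coeff 0 = 0) : s.coeff 1 = 0 := by
  induction h with
  | zero => simp
  | @sq_add p S pS ih =>
    have hc0 : (p * p).coeff 0 + S.coeff 0 = 0 := by simpa using h0
    have h1 : (p * p).coeff 0 = p.coeff 0 * p.coeff 0 := by
      simp [Polynomial.coeff_mul]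
    have hS0 : 0 ≤ S.coeff 0 := sumsq_coeff0_nonneg pS
    have hp0 : p.coeff 0 = 0 := by nlinarith [sq_nonneg (p.coeff 0)]
    have hS : S.coeff 0 = 0 := by rw [h1, hp0] at hc0; linarith
    have h2 : (p * p).coeff 1 = p.coeff 0 * p.coeff 1 + p.coeff 1 * p.coeff 0 := by
      rw [Polynomial.coeff_mul]
      rw [Finset.Nat.sum_antidiagonal_eq_sum_range_succ_mk]
      simp [Finset.sum_range_succ]
    simp only [Polynomial.coeff_add, h2, hp0, ih hS]
    ring

theorem stmt_16 :
    ¬ ∃ (σ₁ ψ₁ σ₂ σ₃ : MvPolynomial (Fin 2) ℝ),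
      IsSumSq σ₁ ∧ IsSumSq σ₂ ∧ IsSumSq σ₃ ∧
      (X 0 * X 1 + X 1 ^ 2 * X 2 : MvPolynomial (Fin 3) ℝ)
        = rename (![0, 1] : Fin 2 → Fin 3) σ₁
          + rename (![0, 1] : Fin 2 → Fin 3) ψ₁ * X 1 ^ 3
          + rename (![1, 2] : Fin 2 → Fin 3) σ₂
          + rename (![1, 2] : Fin 2 → Fin 3) σ₃ * X 2 := by
  rintro ⟨σ₁, ψ₁, σ₂, σ₃, h₁, h₂, h₃, heq⟩
  set φ := (aeval (R := ℝ) (![1, Polynomial.X, 0] : Fin 3 → Polynomial ℝ))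
  have hφ := congrArg φ heq
  simp only [map_add, map_mul, map_pow, aeval_X, aeval_rename, φ,
    Matrix.cons_val_zero, Matrix.cons_val_one, Matrix.head_cons] at hφ
  -- hφ should now be an identity in Polynomial ℝ
  set A := aeval ((![1, Polynomial.X, 0] : Fin 3 → Polynomial ℝ) ∘ ![0,1]) σ₁ with hA
  set B := aeval ((![1, Polynomial.X, 0] : Fin 3 → Polynomial ℝ) ∘ ![0,1]) ψ₁ with hB
  set C := aeval ((![1, Polynomial.X, 0] : Fin 3 → Polynomial ℝ) ∘ ![1,2]) σ₂ with hC
  have h2' : (![1, Polynomial.X, 0] : Fin 3 → Polynomial ℝ) 2 = 0 := rfl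
  rw [h2'] at hφ
  have heq' : Polynomial.X = (A + C) + B * Polynomial.X ^ 3 := by
    linear_combination hφ
  have hAC : IsSumSq (A + C) :=
    (isSumSq_map (aeval ((![1, Polynomial.X, 0] : Fin 3 → Polynomial ℝ) ∘ ![0,1])).toRingHom h₁).add
      (isSumSq_map (aeval ((![1, Polynomial.X, 0] : Fin 3 → Polynomial ℝ) ∘ ![1,2])).toRingHom h₂)
  have e0 : (A + C).coeff 0 = 0 := by
    have := congrArg (fun p => Polynomial.coeff p 0) heq'
    simpa [Polynomial.coeff_mul_X_pow'] using this.symm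
  have e1 : (A + C).coeff 1 = 1 := by
    have := congrArg (fun p => Polynomial.coeff p 1) heq'
    simpa [Polynomial.coeff_mul_X_pow'] using this.symm
  have := key hAC e0
  rw [this] at e1
  exact zero_ne_one e1
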